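/- Let S ⊆ ℂ be a finite set with at least two elements, let z ∈ ℂ with z ≠ 0, and let q : S × S → (S × S)/~ be the quotient map of the equivalence relation (x_A, x_B) ~ (x_A', x_B') ⟺ (x_A - x_A') + z·(x_B - x_B') = 0. Then for every w ∈ ℂ, the minimum cluster distance of q at w equals min{|d_k + w·d_l| : (d_k, d_l) ∈ ΔS × ΔS, d_k + z·d_l ≠ 0}, where ΔS = {x - x' : x, x' ∈ S} is the difference constellation. Consequently, among the clusterings {q_z : z ∈ H} indexed by a finite set H of singular fade states, a clustering q_{z'} maximizes the minimum cluster distance at w if and only if z' maximizes min{|d_k + w·d_l| : (d_k,d_l) ∈ ΔS × ΔS, d_k + z·d_l ≠ 0} over z ∈ H. -/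

import Mathlib

/-- The equivalence relation on `ℂ × ℂ` associated with the singular fade state `ζ`:
`(x_A, x_B) ~ (x_A', x_B') ↔ (x_A - x_A') + ζ·(x_B - x_B') = 0`. -/
def fadeRel (ζ : ℂ) : (ℂ × ℂ) → (ℂ × ℂ) → Prop :=
  fun p q => (p.1 - q.1) + ζ * (p.2 - q.2) = 0

/-- The minimum cluster distance at `w` of the clustering `q_ζ` removing the singular
fade state `ζ` (the quotient map of `fadeRel ζ`), for the signal set `S`. -/
noncomputable def minClusterDist (S : Finset ℂ) (ζ w : ℂ) : ℝ :=
  sInf {t : ℝ | ∃ xA ∈ S, ∃ xB ∈ S, ∃ xA' ∈ S, ∃ xB' ∈ S,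
    Quot.mk (fadeRel ζ) (xA, xB) ≠ Quot.mk (fadeRel ζ) (xA', xB') ∧
    t = ‖(xA - xA') + w * (xB - xB')‖}

/-- `min{|d_k + w·d_l| : (d_k, d_l) ∈ ΔS × ΔS, d_k + ζ·d_l ≠ 0}` where
`ΔS = {x - x' : x, x' ∈ S}` is the difference constellation of `S`. -/
noncomputable def diffMinDist (S : Finset ℂ) (ζ w : ℂ) : ℝ :=
  sInf {t : ℝ | ∃ dk ∈ (S ×ˢ S).image (fun p : ℂ × ℂ => p.1 - p.2),
    ∃ dl ∈ (S ×ˢ S).image (fun p : ℂ × ℂ => p.1 - p.2),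
    dk + ζ * dl ≠ 0 ∧ t = ‖dk + w * dl‖}

/-- For a finite `S ⊆ ℂ` with at least two elements and `z ≠ 0`, the
minimum cluster distance at any `w` of the quotient clustering `q_z` equals
`min{|d_k + w·d_l| : (d_k,d_l) ∈ ΔS × ΔS, d_k + z·d_l ≠ 0}`. Consequently, among the
clusterings `{q_ζ : ζ ∈ H}` indexed by a finite set `H` of (nonzero) singular fade
states, `q_{z'}` maximizes the minimum cluster distance at `w` iff `z'` maximizes
`min{|d_k + w·d_l| : d_k + ζ·d_l ≠ 0}` over `ζ ∈ H`. -/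

lemma fadeRel_equivalence (ζ : ℂ) : Equivalence (fadeRel ζ) := by
  constructor
  · intro p; simp [fadeRel]
  · intro p q h; unfold fadeRel at *; linear_combination -h
  · intro p q r h1 h2; unfold fadeRel at *; linear_combination h1 + h2

lemma quot_mk_ne_iff (ζ : ℂ) (p q : ℂ × ℂ) :
    Quot.mk (fadeRel ζ) p ≠ Quot.mk (fadeRel ζ) q ↔ ¬ fadeRel ζ p q := by
  rw [ne_eq, Quot.eq]
  exact not_congr (Equivalence.eqvGen_iff (fadeRel_equivalence ζ))

lemma key (S : Finset ℂ) (ζ w : ℂ) : minClusterDist S ζ w = diffMinDist S ζ w := by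
  unfold minClusterDist diffMinDist
  congr 1
  ext t
  constructor
  · rintro ⟨xA, hA, xB, hB, xA', hA', xB', hB', hne, rfl⟩
    rw [quot_mk_ne_iff] at hne
    exact ⟨xA - xA', Finset.mem_image.2 ⟨(xA, xA'), Finset.mem_product.2 ⟨hA, hA'⟩, rfl⟩,
      xB - xB', Finset.mem_image.2 ⟨(xB, xB'), Finset.mem_product.2 ⟨hB, hB'⟩, rfl⟩, hne, rfl⟩
  · rintro ⟨dk, hdk, dl, hdl, hne, rfl⟩
    obtain ⟨⟨a, b⟩, hab, rfl⟩ := Finset.mem_image.1 hdk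
    obtain ⟨⟨c, d⟩, hcd, rfl⟩ := Finset.mem_image.1 hdl
    obtain ⟨ha, hb⟩ := Finset.mem_product.1 hab
    obtain ⟨hc, hd⟩ := Finset.mem_product.1 hcd
    exact ⟨a, ha, c, hc, b, hb, d, hd, (quot_mk_ne_iff ζ (a, c) (b, d)).2 hne, rfl⟩

theorem min_cluster_distance_of_quotient_clustering
    (S : Finset ℂ) (hS : 2 ≤ S.card) (z : ℂ) (hz : z ≠ 0) (w : ℂ) :
    minClusterDist S z w = diffMinDist S z w ∧
    ∀ (H : Finset ℂ), (∀ ζ ∈ H, ζ ≠ 0) → ∀ z' ∈ H,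
      ((∀ ζ ∈ H, minClusterDist S ζ w ≤ minClusterDist S z' w) ↔
       (∀ ζ ∈ H, diffMinDist S ζ w ≤ diffMinDist S z' w)) := by
  refine ⟨key S z w, fun H _ z' _ => ?_⟩
  simp only [key]
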